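/- Let q be a prime power and K = F_{q²}. The number of solutions (x₁,…,x_n) ∈ K^n of the diagonal equation x₁^{q+1} + x₂^{q+1} + ⋯ + x_n^{q+1} = 0 equals q^{n−1}(q^n − q + 1) if n is odd, and equals q^{n−1}(q^n + q − 1) if n is even. -/

import Mathlib

open scoped BigOperators
open Finset

lemma aux_fac {q : ℕ} (hq2 : 2 ≤ q) : (q - 1) * (q + 1) = q ^ 2 - 1 := by
  obtain ⟨t, rfl⟩ : ∃ t, q = t + 2 := ⟨q - 2, by omega⟩
  rw [show t + 2 - 1 = t + 1 from by omega]
  have h1 : (t + 1) * (t + 2 + 1) = t * t + 4 * t + 3 := by ring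
  have h2 : (t + 2) ^ 2 = t * t + 4 * t + 4 := by ring
  omega

lemma aux_card_roots {K : Type*} [Field K] [Fintype K] [DecidableEq K] {m : ℕ}
    (hm : 0 < m) (hdvd : m ∣ Fintype.card K - 1) :
    (Finset.univ.filter fun x : K => x ^ m = 1).card = m := by
  obtain ⟨g, hg⟩ := IsCyclic.exists_monoid_generator (α := Kˣ)
  have hord : orderOf g = Fintype.card K - 1 := by
    rw [orderOf_eq_card_of_forall_mem_zpowers (fun x => by
      simpa [Submonoid.mem_powers_iff, Subgroup.mem_zpowers_iff] using
        (mem_powers_iff_mem_zpowers).mp (hg x))]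
    rw [Nat.card_eq_fintype_card, Fintype.card_units]
  obtain ⟨b, hb⟩ := hdvd
  have hcard2 : 2 ≤ Fintype.card K := Fintype.one_lt_card
  have hprim : IsPrimitiveRoot g (Fintype.card K - 1) := hord ▸ IsPrimitiveRoot.orderOf g
  have h2 : IsPrimitiveRoot (g ^ b) m := hprim.pow (by omega) (by rw [hb, mul_comm])
  have h3 : IsPrimitiveRoot ((g ^ b : Kˣ) : K) m := IsPrimitiveRoot.coe_units_iff.mpr h2
  have hset : (Finset.univ.filter fun x : K => x ^ m = 1) = Polynomial.nthRootsFinset m (1 : K) := by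
    ext x; simp [Polynomial.mem_nthRootsFinset hm]
  rw [hset, h3.card_nthRootsFinset]

noncomputable def Ncount (q : ℕ) {K : Type*} [Field K] [Fintype K] (n : ℕ) (a : K) : ℕ :=
  Nat.card {x : Fin n → K // ∑ i, x i ^ (q + 1) = a}

lemma Ncount_succ (q : ℕ) {K : Type*} [Field K] [Fintype K] (n : ℕ) (a : K) :
    Ncount q (n + 1) a = ∑ x0 : K, Ncount q n (a - x0 ^ (q + 1)) := by
  classical
  have e : {x : Fin (n+1) → K // ∑ i, x i ^ (q+1) = a} ≃
      Σ x0 : K, {y : Fin n → K // ∑ i, y i ^ (q+1) = a - x0 ^ (q+1)} :=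
    { toFun := fun x => ⟨x.1 0, Fin.tail x.1, by
        have h := x.2
        rw [Fin.sum_univ_succ] at h
        simp only [Fin.tail]
        linear_combination h⟩
      invFun := fun s => ⟨Fin.cons s.1 s.2.1, by
        rw [Fin.sum_univ_succ]
        simp only [Fin.cons_zero, Fin.cons_succ]
        linear_combination s.2.2⟩
      left_inv := fun x => by
        ext i
        simp [Fin.cons_self_tail]
      right_inv := fun s => by
        refine Sigma.ext rfl (heq_of_eq ?_)
        ext i
        simp [Fin.tail] }
  rw [Ncount, Nat.card_congr e, Nat.card_eq_fintype_card, Fintype.card_sigma]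
  exact Finset.sum_congr rfl fun x0 _ => Nat.card_eq_fintype_card.symm

lemma Ncount_total (q : ℕ) {K : Type*} [Field K] [Fintype K] (n : ℕ) :
    ∑ a : K, Ncount q n a = Fintype.card K ^ n := by
  classical
  have e : (Σ a : K, {x : Fin n → K // ∑ i, x i ^ (q+1) = a}) ≃ (Fin n → K) :=
    { toFun := fun s => s.2.1
      invFun := fun x => ⟨∑ i, x i ^ (q+1), x, rfl⟩
      left_inv := fun ⟨a, x, hx⟩ => by subst hx; rfl
      right_inv := fun x => rfl }
  have h := Nat.card_congr e
  rw [Nat.card_eq_fintype_card, Nat.card_eq_fintype_card, Fintype.card_sigma] at h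
  rw [Fintype.card_fun, Fintype.card_fin] at h
  rw [← h]
  exact Finset.sum_congr rfl fun a _ => Nat.card_eq_fintype_card

lemma Ncount_support (q : ℕ) {K : Type*} [Field K] [Fintype K] (n : ℕ) {a : K}
    (hpow : ∀ x : K, (x ^ (q+1)) ^ q = x ^ (q+1))
    (hadd : ∀ x y : K, x ^ q = x → y ^ q = y → (x + y) ^ q = x + y)
    (hq : 0 < q) (ha : a ^ q ≠ a) :
    Ncount q n a = 0 := by
  rw [Ncount, Nat.card_eq_zero]
  left
  constructor
  rintro ⟨x, hx⟩
  apply ha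
  rw [← hx]
  induction (Finset.univ : Finset (Fin n)) using Finset.cons_induction with
  | empty => simpa using zero_pow (M₀ := K) hq.ne'
  | cons i s hi ih =>
    rw [Finset.sum_cons]
    exact hadd _ _ (hpow _) ih

lemma Ncount_scale (q : ℕ) {K : Type*} [Field K] [Fintype K] (n : ℕ) (a : K) {s : K}
    (hs : s ≠ 0) : Ncount q n (s ^ (q+1) * a) = Ncount q n a := by
  have hs' : s ^ (q+1) ≠ 0 := pow_ne_zero _ hs
  have e : {x : Fin n → K // ∑ i, x i ^ (q+1) = s ^ (q+1) * a} ≃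
      {y : Fin n → K // ∑ i, y i ^ (q+1) = a} :=
    { toFun := fun x => ⟨fun i => x.1 i / s, by
        simp only [div_pow, ← Finset.sum_div, x.2]
        field_simp⟩
      invFun := fun y => ⟨fun i => s * y.1 i, by
        simp only [mul_pow, ← Finset.mul_sum, y.2]⟩
      left_inv := fun x => by ext i; field_simp
      right_inv := fun y => by ext i; field_simp }
  rw [Ncount, Nat.card_congr e, Ncount]

lemma aux_frob {q : ℕ} (hq : IsPrimePow q) {K : Type*} [Field K] [Fintype K]
    (hK : Fintype.card K = q ^ 2) :
    (∀ x y : K, (x + y) ^ q = x ^ q + y ^ q) ∧ (∀ x : K, (-x) ^ q = -(x ^ q)) := by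
  obtain ⟨p, k, hp, hk, hpk⟩ := hq
  have hp' : Nat.Prime p := Nat.prime_iff.mpr hp
  have hr : (ringChar K).Prime := CharP.char_is_prime K (ringChar K)
  obtain ⟨m, hm, hcard⟩ := FiniteField.card K (ringChar K)
  have hpr : p = ringChar K := by
    have h1 : p ^ (2 * k) = ringChar K ^ (m : ℕ) := by
      rw [← hcard, hK, ← hpk]; ring
    have h2 : p ∣ ringChar K ^ (m : ℕ) := h1 ▸ dvd_pow_self p (by omega)
    exact (Nat.prime_dvd_prime_iff_eq hp' hr).mp (hp'.dvd_of_dvd_pow h2)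
  haveI : Fact p.Prime := ⟨hp'⟩
  haveI : CharP K p := hpr ▸ ringChar.charP K
  subst hpk
  constructor
  · exact fun x y => add_pow_char_pow x y p k
  · intro x
    have h := sub_pow_char_pow (R := K) (p := p) (n := k) 0 x
    have hz : (0 : K) ^ p ^ k = 0 := zero_pow (pow_ne_zero k hp'.pos.ne')
    rw [hz] at h
    simpa using h

lemma aux_surj {q : ℕ} (hq2 : 2 ≤ q) {K : Type*} [Field K] [Fintype K]
    (hK : Fintype.card K = q ^ 2) {b : K} (hb : b ≠ 0) (hbq : b ^ (q - 1) = 1) :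
    ∃ s : K, s ^ (q + 1) = b := by
  classical
  have hfac1 : (q - 1) * (q + 1) = q ^ 2 - 1 := by
    obtain ⟨t, rfl⟩ : ∃ t, q = t + 2 := ⟨q - 2, by omega⟩
    rw [show t + 2 - 1 = t + 1 from by omega]
    have h1 : (t + 1) * (t + 2 + 1) = t * t + 4 * t + 3 := by ring
    have h2 : (t + 2) ^ 2 = t * t + 4 * t + 4 := by ring
    omega
  have hfac2 : (q + 1) * (q - 1) = q ^ 2 - 1 := by rw [mul_comm]; exact hfac1
  have hcardU : Nat.card Kˣ = q ^ 2 - 1 := by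
    rw [Nat.card_eq_fintype_card, Fintype.card_units, hK]
  obtain ⟨g, hg⟩ := IsCyclic.exists_monoid_generator (α := Kˣ)
  have hord : orderOf g = q ^ 2 - 1 := by
    rw [orderOf_eq_card_of_forall_mem_zpowers (fun x => by
      simpa using (mem_powers_iff_mem_zpowers).mp (hg x)), hcardU]
  have hprim : IsPrimitiveRoot g (q ^ 2 - 1) := hord ▸ IsPrimitiveRoot.orderOf g
  have hq2pos : 0 < q ^ 2 - 1 := by
    have : 4 ≤ q ^ 2 := by nlinarith
    omega
  haveI : NeZero (q + 1) := ⟨by omega⟩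
  haveI : NeZero (q - 1) := ⟨by omega⟩
  have hk1 : IsPrimitiveRoot (g ^ (q - 1)) (q + 1) := hprim.pow hq2pos hfac1.symm
  have hk2 : IsPrimitiveRoot (g ^ (q + 1)) (q - 1) := hprim.pow hq2pos hfac2.symm
  set φ := powMonoidHom (q + 1) (α := Kˣ) with hφ
  have hkerφ : φ.ker = rootsOfUnity (q + 1) K := by
    ext x
    simp [MonoidHom.mem_ker, mem_rootsOfUnity, hφ, powMonoidHom]
  have hker : Nat.card φ.ker = q + 1 := by
    rw [hkerφ, hk1.card_rootsOfUnity']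
  have hquot : Nat.card (Kˣ ⧸ φ.ker) = Nat.card φ.range :=
    Nat.card_congr (QuotientGroup.quotientKerEquivRange φ).toEquiv
  have htot : Nat.card Kˣ = Nat.card (Kˣ ⧸ φ.ker) * Nat.card φ.ker :=
    Subgroup.card_eq_card_quotient_mul_card_subgroup _
  have hrange : Nat.card φ.range = q - 1 := by
    have h3 : Nat.card φ.range * (q + 1) = (q - 1) * (q + 1) := by
      rw [hfac1, ← hcardU, htot, hquot, hker]
    exact Nat.eq_of_mul_eq_mul_right (by omega) h3
  have hS : Nat.card (rootsOfUnity (q - 1) K) = q - 1 := by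
    rw [hk2.card_rootsOfUnity']
  have hle : φ.range ≤ rootsOfUnity (q - 1) K := by
    rintro _ ⟨x, rfl⟩
    rw [mem_rootsOfUnity]
    show (x ^ (q + 1)) ^ (q - 1) = 1
    rw [← pow_mul, hfac2, ← hcardU, Nat.card_eq_fintype_card]
    exact pow_card_eq_one
  have heq : φ.range = rootsOfUnity (q - 1) K :=
    Subgroup.eq_of_le_of_card_ge hle (by rw [hrange, hS])
  have hbmem : Units.mk0 b hb ∈ φ.range := by
    rw [heq, mem_rootsOfUnity]
    ext
    simpa using hbq
  obtain ⟨x, hx⟩ := hbmem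
  refine ⟨(x : K), ?_⟩
  have := congrArg Units.val hx
  simpa [hφ] using this

/-- In the finite field `K = F_{q²}`, the number of solutions of the
diagonal equation `x₁^{q+1} + ⋯ + x_n^{q+1} = 0` is `q^{n-1}(q^n - q + 1)` if `n` is odd
and `q^{n-1}(q^n + q - 1)` if `n` is even. -/
theorem card_diagonal_eq_zero
    (q : ℕ) (hq : IsPrimePow q)
    {K : Type*} [Field K] [Fintype K] (hK : Fintype.card K = q ^ 2)
    (n : ℕ) (hn : 0 < n) :
    (Nat.card {x : Fin n → K // ∑ i, x i ^ (q + 1) = 0} : ℤ) =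
      if Odd n then (q : ℤ) ^ (n - 1) * ((q : ℤ) ^ n - q + 1)
      else (q : ℤ) ^ (n - 1) * ((q : ℤ) ^ n + q - 1) := by
  classical
  have hq2 : 2 ≤ q := hq.two_le
  have hq1 : 0 < q := by omega
  have hfac : (q - 1) * (q + 1) = q ^ 2 - 1 := aux_fac hq2
  have hq4 : 4 ≤ q ^ 2 := by nlinarith
  obtain ⟨hadd, hneg⟩ := aux_frob hq hK
  have hxcard : ∀ x : K, x ^ (q ^ 2) = x := fun x => by rw [← hK]; exact FiniteField.pow_card x
  have hpow : ∀ x : K, (x ^ (q + 1)) ^ q = x ^ (q + 1) := by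
    intro x
    rw [← pow_mul, show (q + 1) * q = q ^ 2 + q by ring, pow_add, hxcard, ← pow_succ']
  have haddFix : ∀ x y : K, x ^ q = x → y ^ q = y → (x + y) ^ q = x + y :=
    fun x y hx hy => by rw [hadd x y, hx, hy]
  -- constancy on nonzero elements of F_q
  have hconst : ∀ (n : ℕ) (a : K), a ≠ 0 → a ^ q = a → Ncount q n a = Ncount q n (1 : K) := by
    intro n a ha haq
    have ha1 : a ^ (q - 1) = 1 := by
      have h : a ^ (q - 1) * a = a := by
        rw [← pow_succ]
        rw [show q - 1 + 1 = q by omega]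
        exact haq
      have := mul_right_cancel₀ ha (h.trans (one_mul a).symm)
      exact this
    obtain ⟨s, hs⟩ := aux_surj hq2 hK ha ha1
    have hs0 : s ≠ 0 := by
      rintro rfl
      exact ha (by rw [← hs, zero_pow (by omega)])
    calc Ncount q n a = Ncount q n (s ^ (q + 1) * 1) := by rw [mul_one, hs]
      _ = Ncount q n 1 := Ncount_scale q n 1 hs0
  -- the set F_q
  set B : Finset K := univ.filter fun a : K => a ^ (q - 1) = 1 with hB
  have hBne : (0 : K) ∉ B := by
    simp only [hB, mem_filter, mem_univ, true_and]
    rw [zero_pow (by omega : q - 1 ≠ 0)]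
    exact zero_ne_one
  have hBcard : B.card = q - 1 := by
    apply aux_card_roots (by omega)
    rw [hK]
    exact ⟨q + 1, by rw [← hfac, mul_comm]⟩
  have hFeq : (univ.filter fun a : K => a ^ q = a) = insert (0 : K) B := by
    ext a
    simp only [mem_insert, mem_filter, mem_univ, true_and, hB]
    constructor
    · intro h
      by_cases ha : a = 0
      · exact Or.inl ha
      · right
        have h1 : a ^ (q - 1) * a = a := by
          rw [← pow_succ, show q - 1 + 1 = q by omega]; exact h
        exact mul_right_cancel₀ ha (h1.trans (one_mul a).symm)
    · rintro (rfl | h)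
      · exact zero_pow (by omega)
      · rw [show q = q - 1 + 1 by omega, pow_succ, h, one_mul]
  -- the key identity
  have hId : ∀ n : ℕ, Ncount q n (0 : K) + (q - 1) * Ncount q n (1 : K) = q ^ (2 * n) := by
    intro n
    have h1 : ∑ a : K, Ncount q n a = q ^ (2 * n) := by
      rw [Ncount_total, hK, ← pow_mul]
    rw [← Finset.sum_filter_add_sum_filter_not univ (fun a : K => a ^ q = a)] at h1
    have h2 : ∑ a ∈ univ.filter (fun a : K => ¬ a ^ q = a), Ncount q n a = 0 :=
      Finset.sum_eq_zero fun a ha => Ncount_support q n hpow haddFix hq1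
        (by simpa using (mem_filter.mp ha).2)
    rw [h2, add_zero, hFeq, Finset.sum_insert hBne] at h1
    have h3 : ∑ a ∈ B, Ncount q n a = (q - 1) * Ncount q n (1 : K) := by
      rw [Finset.sum_congr rfl (fun a ha => ?_), Finset.sum_const, hBcard, smul_eq_mul]
      have haB := mem_filter.mp ha
      have ha0 : a ≠ 0 := by
        rintro rfl
        exact hBne ha
      have haq : a ^ q = a := by
        rw [show q = q - 1 + 1 by omega, pow_succ, haB.2, one_mul]
      exact hconst n a ha0 haq
    rw [h3] at h1
    exact h1
  -- the recursion
  have hrec : ∀ n : ℕ, Ncount q (n + 1) (0 : K) =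
      Ncount q n (0 : K) + (q ^ 2 - 1) * Ncount q n (1 : K) := by
    intro n
    rw [Ncount_succ]
    rw [← Finset.sum_erase_add univ _ (mem_univ (0 : K))]
    have h0 : (0 : K) - 0 ^ (q + 1) = 0 := by rw [zero_pow (by omega : q + 1 ≠ 0), sub_zero]
    have hterm : ∀ x0 ∈ univ.erase (0 : K),
        Ncount q n ((0 : K) - x0 ^ (q + 1)) = Ncount q n (1 : K) := by
      intro x0 hx0
      have hx0' : x0 ≠ 0 := Finset.ne_of_mem_erase hx0
      have hc0 : -(x0 ^ (q + 1)) ≠ 0 := neg_ne_zero.mpr (pow_ne_zero _ hx0')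
      have hcq : (-(x0 ^ (q + 1))) ^ q = -(x0 ^ (q + 1)) := by rw [hneg, hpow]
      rw [zero_sub]
      exact hconst n _ hc0 hcq
    rw [Finset.sum_congr rfl hterm, Finset.sum_const, smul_eq_mul,
      Finset.card_erase_of_mem (mem_univ _), Finset.card_univ, hK, h0]
    exact add_comm _ _
  -- base cases
  have hbase0 : Ncount q 0 (0 : K) = 1 := by
    rw [Ncount]
    have he : ∀ x : Fin 0 → K, ∑ i, x i ^ (q + 1) = (0 : K) := fun x => by simp
    rw [Nat.card_congr (Equiv.subtypeUnivEquiv he)]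
    simp [Nat.card_eq_fintype_card]
  have hbase1 : Ncount q 0 (1 : K) = 0 := by
    rw [Ncount, Nat.card_eq_zero]
    left
    exact ⟨fun x => (one_ne_zero : (1 : K) ≠ 0) (by simpa using x.2.symm)⟩
  -- main induction
  have main : ∀ m : ℕ, (Ncount q (m + 1) (0 : K) : ℤ) =
      (q : ℤ) ^ m * ((q : ℤ) ^ (m + 1) + (-1) ^ (m + 1) * ((q : ℤ) - 1)) := by
    intro m
    induction m with
    | zero =>
      rw [hrec 0, hbase0, hbase1]
      push_cast
      ring
    | succ m ih =>
      have h2 := hrec (m + 1)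
      have h3 := hId (m + 1)
      zify [show 1 ≤ q by omega, show 1 ≤ q ^ 2 by omega] at h2 h3
      have hq0 : ((q : ℤ) - 1) ≠ 0 := by
        have : (2 : ℤ) ≤ (q : ℤ) := by exact_mod_cast hq2
        omega
      apply mul_left_cancel₀ hq0
      have e3 : (q : ℤ) ^ (2 * (m + 1)) = ((q : ℤ) ^ m) ^ 2 * (q : ℤ) ^ 2 := by ring
      rw [h2, ih]
      rw [e3] at h3
      linear_combination ((q : ℤ) ^ 2 - 1) * h3 + (1 - (q : ℤ) ^ 2) * ih
  obtain ⟨m, rfl⟩ : ∃ m, n = m + 1 := ⟨n - 1, by omega⟩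
  have hcast : (Nat.card {x : Fin (m + 1) → K // ∑ i, x i ^ (q + 1) = 0} : ℤ) =
      (Ncount q (m + 1) (0 : K) : ℤ) := rfl
  rw [hcast, main m]
  by_cases h : Odd (m + 1)
  · rw [if_pos h, h.neg_one_pow]
    simp only [Nat.add_sub_cancel]
    ring
  · rw [if_neg h, (Nat.not_odd_iff_even.mp h).neg_one_pow]
    simp only [Nat.add_sub_cancel]
    ring
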